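/- Let End be the category of sets equipped with an endomorphism. Regarding ℕ and ℤ as objects of End via the successor maps, the projection ℤ × ℕ → ℤ is a local retraction in End but not a split epimorphism. -/

import Mathlib

open CategoryTheory CategoryTheory.Limits Opposite

/-- The category `End` of sets equipped with an endomorphism. -/
structure EndObj : Type 1 where
  carrier : Type
  endo : carrier → carrier

instance : CategoryStruct EndObj where
  Hom A B := { f : A.carrier → B.carrier // B.endo ∘ f = f ∘ A.endo }
  id A := ⟨id, rfl⟩
  comp f g := ⟨g.1 ∘ f.1, by
    funext x
    have hg := congrFun g.2
    have hf := congrFun f.2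
    simp only [Function.comp_apply] at hg hf ⊢
    rw [hg, hf]⟩

instance : Category EndObj where
  id_comp f := rfl
  comp_id f := rfl
  assoc f g h := rfl

/-- An object is finitely presentable if its covariant hom-functor preserves
small filtered colimits. -/
def IsFinitelyPresentable (Γ : EndObj) : Prop :=
  ∀ (J : Type) (_ : SmallCategory J) (_ : IsFiltered J),
    Nonempty (PreservesColimitsOfShape J (coyoneda.obj (op Γ)))

/-- A morphism is a local retraction if every morphism from a finitely
presentable object into its codomain lifts through it. -/
def LocalRetraction {X Y : EndObj} (p : X ⟶ Y) : Prop :=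
  ∀ (Γ : EndObj), _root_.IsFinitelyPresentable Γ → ∀ f : Γ ⟶ Y, ∃ g : Γ ⟶ X, g ≫ p = f

/-- `ℕ` with successor as an object of `End`. -/
def NatObj : EndObj := ⟨ℕ, fun n => n + 1⟩

/-- `ℤ` with successor as an object of `End`. -/
def IntObj : EndObj := ⟨ℤ, fun z => z + 1⟩

/-- `ℤ × ℕ` with the componentwise successor. -/
def ProdObj : EndObj := ⟨ℤ × ℕ, fun x => (x.1 + 1, x.2 + 1)⟩

/-- The projection `ℤ × ℕ → ℤ` in `End`. -/
def proj : ProdObj ⟶ IntObj := ⟨Prod.fst, rfl⟩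

/-- Hom extensionality in `End`. -/
lemma EndHom.ext {A B : EndObj} {f g : A ⟶ B} (h : ∀ x, f.1 x = g.1 x) : f = g :=
  Subtype.ext (funext h)

/-- The chain of copies of `NatObj` whose colimit is `IntObj`. -/
def chainD : ℕ ⥤ EndObj where
  obj _ := NatObj
  map {n m} _ := ⟨fun k : ℕ => (k + (m - n) : ℕ), by
    funext (k : ℕ)
    show ((k + (m - n)) + 1 : ℕ) = ((k + 1) + (m - n) : ℕ)
    omega⟩
  map_id n := EndHom.ext (fun (k : ℕ) => by show (k + (n - n) : ℕ) = k; omega)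
  map_comp {n m p} f g := by
    have hnm := leOfHom f
    have hmp := leOfHom g
    refine EndHom.ext (fun (k : ℕ) => ?_)
    show (k + (p - n) : ℕ) = ((k + (m - n)) + (p - m) : ℕ)
    omega

/-- The cocone over the chain with point `IntObj`. -/
def chainCocone : Cocone chainD where
  pt := IntObj
  ι :=
    { app := fun n => ⟨fun k : ℕ => ((k : ℤ) - (n:ℤ) : ℤ), by
        funext (k : ℕ)
        show ((k : ℤ) - (n:ℤ)) + 1 = ((k + 1 : ℕ) : ℤ) - (n:ℤ)
        push_cast
        ring⟩
      naturality := fun n m f => by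
        have h := leOfHom f
        refine EndHom.ext (fun (k : ℕ) => ?_)
        show (((k + (m - n) : ℕ)) : ℤ) - (m:ℤ) = (k : ℤ) - (n:ℤ)
        omega }

/-- The value of a cocone leg. -/
private def cval (s : Cocone chainD) (n : ℕ) (k : ℕ) : s.pt.carrier := (s.ι.app n).1 k

private lemma cval_step (s : Cocone chainD) (n k : ℕ) :
    s.pt.endo (cval s n k) = cval s n (k + 1) :=
  congrFun (s.ι.app n).2 k

private lemma cval_trans (s : Cocone chainD) {n m : ℕ} (h : n ≤ m) (k : ℕ) :
    cval s m (k + (m - n)) = cval s n k :=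
  congrFun (congrArg Subtype.val (s.w (homOfLE h))) k

private lemma cval_eq (s : Cocone chainD) {a b ka kb : ℕ}
    (h : (ka : ℤ) - a = (kb : ℤ) - b) : cval s a ka = cval s b kb := by
  have ha : a ≤ max a b := le_max_left a b
  have hb : b ≤ max a b := le_max_right a b
  have h1 := cval_trans s ha ka
  have h2 := cval_trans s hb kb
  have : ka + (max a b - a) = kb + (max a b - b) := by omega
  rw [← h1, ← h2, this]

/-- `chainCocone` is a colimit cocone. -/
def chainIsColimit : IsColimit chainCocone where
  desc s := ⟨fun z : ℤ => cval s (-z).toNat ((z + (-z).toNat).toNat), by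
    funext (z : ℤ)
    show s.pt.endo (cval s (-z).toNat ((z + (-z).toNat).toNat))
        = cval s (-(z + 1)).toNat (((z + 1) + (-(z + 1)).toNat).toNat)
    rw [cval_step]
    exact cval_eq s (by omega)⟩
  fac s n := by
    refine EndHom.ext (fun (k : ℕ) => ?_)
    show cval s (-((k : ℤ) - n)).toNat ((((k : ℤ) - n) + (-((k : ℤ) - n)).toNat).toNat)
        = cval s n k
    exact cval_eq s (by omega)
  uniq s u hu := by
    refine EndHom.ext (fun (z : ℤ) => ?_)
    show u.1 z = cval s (-z).toNat ((z + (-z).toNat).toNat)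
    have h1 : (((z + (-z).toNat).toNat : ℕ) : ℤ) - (((-z).toNat : ℕ) : ℤ) = z := by omega
    have h2 : u.1 ((((z + (-z).toNat).toNat : ℕ) : ℤ) - (((-z).toNat : ℕ) : ℤ))
        = cval s (-z).toNat ((z + (-z).toNat).toNat) :=
      congrFun (congrArg Subtype.val (hu (-z).toNat)) ((z + (-z).toNat).toNat)
    rw [← h2, h1]

/-- Each leg of the chain lifts through `proj`. -/
def chainLift (n : ℕ) : NatObj ⟶ ProdObj :=
  ⟨fun k : ℕ => (((k : ℤ) - n, k) : ℤ × ℕ), by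
    funext (k : ℕ)
    show ((((k : ℤ) - n) + 1, k + 1) : ℤ × ℕ) = (((k + 1 : ℕ) : ℤ) - n, k + 1)
    have : ((k : ℤ) - n) + 1 = ((k + 1 : ℕ) : ℤ) - n := by push_cast; ring
    rw [this]⟩

lemma chainLift_proj (n : ℕ) : chainLift n ≫ proj = chainCocone.ι.app n := rfl

/-- The projection `ℤ × ℕ → ℤ` is a local retraction in `End` but not a split
epimorphism. -/
theorem proj_localRetraction_not_splitEpi :
    LocalRetraction proj ∧ ¬ IsSplitEpi proj := by
  constructor
  · intro Γ hΓ f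
    have P : PreservesColimitsOfShape ℕ (coyoneda.obj (op Γ)) :=
      (hΓ ℕ inferInstance inferInstance).some
    have hc : IsColimit ((coyoneda.obj (op Γ)).mapCocone chainCocone) :=
      isColimitOfPreserves _ chainIsColimit
    obtain ⟨n, g, hg⟩ := Types.jointly_surjective (chainD ⋙ coyoneda.obj (op Γ)) hc
      (f : ((coyoneda.obj (op Γ)).mapCocone chainCocone).pt)
    have hg' : (g : Γ ⟶ NatObj) ≫ chainCocone.ι.app n = f := hg
    refine ⟨(g : Γ ⟶ NatObj) ≫ chainLift n, ?_⟩
    show (g : Γ ⟶ NatObj) ≫ chainCocone.ι.app n = f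
    exact hg'
  · rintro ⟨⟨s, hs⟩⟩
    set g : ℤ → ℕ := fun z => (s.1 z).2 with hgdef
    have hstep : ∀ z : ℤ, g (z + 1) = g z + 1 := by
      intro z
      have := congrFun s.2 z
      exact (congrArg Prod.snd this).symm
    have hiter : ∀ (k : ℕ) (z : ℤ), g (z + k) = g z + k := by
      intro k
      induction k with
      | zero => simp
      | succ n ih =>
        intro z
        have h1 : z + ((n + 1 : ℕ) : ℤ) = (z + n) + 1 := by push_cast; ring
        rw [h1, hstep, ih]
        omega
    have key := hiter (g 0 + 1) (-(g 0 : ℤ) - 1)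
    have h1 : (-(g 0 : ℤ) - 1) + ((g 0 + 1 : ℕ) : ℤ) = 0 := by push_cast; ring
    rw [h1] at key
    omega
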